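/- Any density matrix ρ with Tr(Mρ) = k (for a fixed effect operator 0 ≤ M ≤ I and constant k ∈ [0,1]) can be written as a convex combination of pure states |ψ_i⟩⟨ψ_i| each satisfying ⟨ψ_i|M|ψ_i⟩ = k, provided the set {τ density matrix : Tr(Mτ) = k} contains ρ; i.e., the extreme points of this convex set that appear in some decomposition of ρ can be taken to be pure states satisfying the same linear constraint. -/

import Mathlib

open scoped Matrix ComplexOrder

/-- Square root of a Hermitian matrix via the spectral theorem (junk value `0` otherwise). -/
noncomputable def msqrt {n : ℕ} (A : Matrix (Fin n) (Fin n) ℂ) : Matrix (Fin n) (Fin n) ℂ :=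
  if h : A.IsHermitian then
    (h.eigenvectorUnitary : Matrix (Fin n) (Fin n) ℂ) *
      Matrix.diagonal (fun i => (Real.sqrt (h.eigenvalues i) : ℂ)) *
      (h.eigenvectorUnitary : Matrix (Fin n) (Fin n) ℂ)ᴴ
  else 0

/-- Quantum fidelity `F(ρ,σ) = Tr √(√ρ σ √ρ)`. -/
noncomputable def fidelity {n : ℕ} (ρ σ : Matrix (Fin n) (Fin n) ℂ) : ℝ :=
  (msqrt (msqrt ρ * σ * msqrt ρ)).trace.re

/-- Von Neumann entropy `S(ρ) = -Tr(ρ log ρ)` via eigenvalues (junk value `0` if not Hermitian);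
note `Real.log 0 = 0` so `0 log 0 = 0`. -/
noncomputable def vnEntropy {n : ℕ} (ρ : Matrix (Fin n) (Fin n) ℂ) : ℝ :=
  if h : ρ.IsHermitian then -∑ i, (h.eigenvalues i) * Real.log (h.eigenvalues i) else 0

/-- Outer product `|ψ⟩⟨ψ|`. -/
noncomputable def proj {n : ℕ} (ψ : Fin n → ℂ) : Matrix (Fin n) (Fin n) ℂ :=
  Matrix.of fun i j => ψ i * star (ψ j)

/-- Inner product `⟨ψ|φ⟩`. -/
noncomputable def qInner {n : ℕ} (ψ φ : Fin n → ℂ) : ℂ := ∑ i, star (ψ i) * φ i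

lemma exists_phase (c : ℂ) : ∃ u : ℂ, u * (starRingEnd ℂ) u = 1 ∧
    u * c + (starRingEnd ℂ) u * (starRingEnd ℂ) c = 0 := by
  rcases eq_or_ne c 0 with h | h
  · exact ⟨1, by simp, by simp [h]⟩
  · have habs : (‖c‖ : ℂ) ≠ 0 := by
      simpa [Complex.ofReal_eq_zero] using (norm_ne_zero_iff.mpr h)
    have key : c * (starRingEnd ℂ) c = (‖c‖ : ℂ) * (‖c‖ : ℂ) := by
      rw [Complex.mul_conj, Complex.normSq_eq_norm_sq]; push_cast; ring
    have hcu : (starRingEnd ℂ) (Complex.I * (starRingEnd ℂ) c / (‖c‖ : ℂ)) =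
        -Complex.I * c / (‖c‖ : ℂ) := by
      simp [map_div₀, map_mul, Complex.conj_I, Complex.conj_conj, Complex.conj_ofReal]
    refine ⟨Complex.I * (starRingEnd ℂ) c / (‖c‖ : ℂ), ?_, ?_⟩
    · rw [hcu]; field_simp
      linear_combination key - c * (starRingEnd ℂ) c * Complex.I_mul_I
    · rw [hcu]; field_simp; ring

/-- Constrained pure-state decomposition (qubit case): for a fixed effect operator
`0 ≤ M ≤ I` on `ℂ²`, every density matrix `ρ` with `Tr(Mρ) = k` admits a finite convex
decomposition `ρ = ∑ᵢ λᵢ |ψᵢ⟩⟨ψᵢ|` into pure states each satisfying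
`⟨ψᵢ|M|ψᵢ⟩ = Tr(M|ψᵢ⟩⟨ψᵢ|) = k`. -/
theorem constrained_pure_decomposition (M ρ : Matrix (Fin 2) (Fin 2) ℂ)
    (hM : M.PosSemidef) (hM' : (1 - M).PosSemidef)
    (hρ : ρ.PosSemidef) (htρ : ρ.trace = 1)
    (k : ℂ) (hk : (M * ρ).trace = k) :
    ∃ (N : ℕ) (lam : Fin N → ℝ) (ψ : Fin N → Fin 2 → ℂ),
      (∀ i, 0 ≤ lam i) ∧ (∑ i, lam i = 1) ∧ (∀ i, qInner (ψ i) (ψ i) = 1) ∧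
      ρ = ∑ i, (lam i : ℂ) • proj (ψ i) ∧
      ∀ i, (M * proj (ψ i)).trace = k := by
  have hH : ρ.IsHermitian := hρ.1
  set a : Fin 2 → ℂ := fun i => hH.eigenvectorBasis 0 i with ha'
  set b : Fin 2 → ℂ := fun i => hH.eigenvectorBasis 1 i with hb'
  set l0 : ℝ := hH.eigenvalues 0 with hl0'
  set l1 : ℝ := hH.eigenvalues 1 with hl1'
  have hl0 : 0 ≤ l0 := hρ.eigenvalues_nonneg 0
  have hl1 : 0 ≤ l1 := hρ.eigenvalues_nonneg 1
  -- spectral decomposition, entrywise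
  have hdecomp : ∀ i j, ρ i j = (l0 : ℂ) * (a i * starRingEnd ℂ (a j))
      + (l1 : ℂ) * (b i * starRingEnd ℂ (b j)) := by
    intro i j
    conv_lhs => rw [hH.spectral_theorem]
    simp [Matrix.mul_apply, Matrix.diagonal_apply, Fin.sum_univ_two, Matrix.star_apply,
      ha', hb', hl0', hl1']
    ring
  -- orthonormality of eigenvector columns
  have horth : star (hH.eigenvectorUnitary : Matrix (Fin 2) (Fin 2) ℂ) *
      (hH.eigenvectorUnitary : Matrix (Fin 2) (Fin 2) ℂ) = 1 :=
    Matrix.mem_unitaryGroup_iff'.mp hH.eigenvectorUnitary.2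
  have haa : starRingEnd ℂ (a 0) * a 0 + starRingEnd ℂ (a 1) * a 1 = 1 := by
    have := congrFun (congrFun horth 0) 0
    simpa [Matrix.mul_apply, Fin.sum_univ_two, Matrix.star_apply, Matrix.one_apply, ha'] using this
  have hbb : starRingEnd ℂ (b 0) * b 0 + starRingEnd ℂ (b 1) * b 1 = 1 := by
    have := congrFun (congrFun horth 1) 1
    simpa [Matrix.mul_apply, Fin.sum_univ_two, Matrix.star_apply, Matrix.one_apply, hb'] using this
  have hab : starRingEnd ℂ (a 0) * b 0 + starRingEnd ℂ (a 1) * b 1 = 0 := by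
    have := congrFun (congrFun horth 0) 1
    simpa [Matrix.mul_apply, Fin.sum_univ_two, Matrix.star_apply, Matrix.one_apply, ha', hb'] using this
  have hba : starRingEnd ℂ (b 0) * a 0 + starRingEnd ℂ (b 1) * a 1 = 0 := by
    have := congrFun (congrFun horth 1) 0
    simpa [Matrix.mul_apply, Fin.sum_univ_two, Matrix.star_apply, Matrix.one_apply, ha', hb'] using this
  -- eigenvalues sum to one
  have htρ' : ρ 0 0 + ρ 1 1 = 1 := by simpa [Matrix.trace, Fin.sum_univ_two] using htρ
  have hsum : (l0 : ℂ) + (l1 : ℂ) = 1 := by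
    linear_combination htρ' - hdecomp 0 0 - hdecomp 1 1 - (l0 : ℂ) * haa - (l1 : ℂ) * hbb
  -- the constraint in terms of eigenvectors
  have hk' : M 0 0 * ρ 0 0 + M 0 1 * ρ 1 0 + (M 1 0 * ρ 0 1 + M 1 1 * ρ 1 1) = k := by
    simpa [Matrix.trace, Matrix.mul_apply, Fin.sum_univ_two] using hk
  have hkB : (l0 : ℂ) * (starRingEnd ℂ (a 0) * M 0 0 * a 0 + starRingEnd ℂ (a 0) * M 0 1 * a 1
        + starRingEnd ℂ (a 1) * M 1 0 * a 0 + starRingEnd ℂ (a 1) * M 1 1 * a 1)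
      + (l1 : ℂ) * (starRingEnd ℂ (b 0) * M 0 0 * b 0 + starRingEnd ℂ (b 0) * M 0 1 * b 1
        + starRingEnd ℂ (b 1) * M 1 0 * b 0 + starRingEnd ℂ (b 1) * M 1 1 * b 1) = k := by
    linear_combination hk' - M 0 0 * hdecomp 0 0 - M 0 1 * hdecomp 1 0
      - M 1 0 * hdecomp 0 1 - M 1 1 * hdecomp 1 1
  -- hermiticity of M entrywise
  have hMH : ∀ i j, starRingEnd ℂ (M i j) = M j i := fun i j => hM.1.apply j i
  -- cross term and phase
  set X : ℂ := (Real.sqrt l0 : ℂ) with hX'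
  set Y : ℂ := (Real.sqrt l1 : ℂ) with hY'
  have hX2 : X * X = (l0 : ℂ) := by
    rw [hX', ← Complex.ofReal_mul, Real.mul_self_sqrt hl0]
  have hY2 : Y * Y = (l1 : ℂ) := by
    rw [hY', ← Complex.ofReal_mul, Real.mul_self_sqrt hl1]
  have hXc : starRingEnd ℂ X = X := by rw [hX']; exact Complex.conj_ofReal _
  have hYc : starRingEnd ℂ Y = Y := by rw [hY']; exact Complex.conj_ofReal _
  set Bab : ℂ := starRingEnd ℂ (a 0) * M 0 0 * b 0 + starRingEnd ℂ (a 0) * M 0 1 * b 1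
      + starRingEnd ℂ (a 1) * M 1 0 * b 0 + starRingEnd ℂ (a 1) * M 1 1 * b 1 with hBab'
  set Bba : ℂ := starRingEnd ℂ (b 0) * M 0 0 * a 0 + starRingEnd ℂ (b 0) * M 0 1 * a 1
      + starRingEnd ℂ (b 1) * M 1 0 * a 0 + starRingEnd ℂ (b 1) * M 1 1 * a 1 with hBba'
  have hBconj : starRingEnd ℂ (X * Y * Bab) = X * Y * Bba := by
    rw [hBab', hBba', hX', hY']
    simp only [map_add, map_mul, Complex.conj_conj, Complex.conj_ofReal]
    linear_combination (Real.sqrt l0 : ℂ) * (Real.sqrt l1 : ℂ) *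
      ((a 0 * starRingEnd ℂ (b 0)) * hMH 0 0 + (a 0 * starRingEnd ℂ (b 1)) * hMH 0 1
      + (a 1 * starRingEnd ℂ (b 0)) * hMH 1 0 + (a 1 * starRingEnd ℂ (b 1)) * hMH 1 1)
  obtain ⟨u, huu, huc⟩ := exists_phase (X * Y * Bab)
  rw [hBconj] at huc
  -- the decomposition
  refine ⟨2, fun _ => (1/2 : ℝ),
    ![fun j => X * a j + u * Y * b j, fun j => X * a j - u * Y * b j], ?_, ?_, ?_, ?_, ?_⟩
  · intro i; norm_num
  · norm_num [Fin.sum_univ_two]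
  · intro i
    fin_cases i
    · simp only [qInner, Fin.sum_univ_two, Fin.zero_eta, Fin.mk_one, Matrix.cons_val_zero,
        Matrix.cons_val_one, Matrix.head_cons, star_add, star_sub, star_mul',
        Complex.star_def, map_mul, map_add, map_sub, hXc, hYc]
      linear_combination X * X * haa + u * (starRingEnd ℂ) u * (Y * Y) * hbb
        + X * u * Y * hab + X * (starRingEnd ℂ) u * Y * hba + hX2 + Y * Y * huu + hY2 + hsum
    · simp only [qInner, Fin.sum_univ_two, Fin.zero_eta, Fin.mk_one, Matrix.cons_val_zero,
        Matrix.cons_val_one, Matrix.head_cons, star_add, star_sub, star_mul',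
        Complex.star_def, map_mul, map_add, map_sub, hXc, hYc]
      linear_combination X * X * haa + u * (starRingEnd ℂ) u * (Y * Y) * hbb
        - X * u * Y * hab - X * (starRingEnd ℂ) u * Y * hba + hX2 + Y * Y * huu + hY2 + hsum
  · ext i j
    simp only [Fin.sum_univ_two, Matrix.add_apply, Matrix.smul_apply, proj, Matrix.of_apply,
      Matrix.cons_val_zero, Matrix.cons_val_one, Matrix.head_cons, smul_eq_mul, star_add,
      star_sub, star_mul', Complex.star_def, map_mul, map_add, map_sub, hXc, hYc]
    push_cast
    linear_combination hdecomp i j - (a i * starRingEnd ℂ (a j)) * hX2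
      - (b i * starRingEnd ℂ (b j)) * (Y * Y) * huu - (b i * starRingEnd ℂ (b j)) * hY2
  · intro i
    fin_cases i
    · simp only [Matrix.trace, Matrix.mul_apply, Matrix.diag_apply, Fin.sum_univ_two, proj,
        Matrix.of_apply, Fin.zero_eta, Fin.mk_one, Matrix.cons_val_zero, Matrix.cons_val_one,
        Matrix.head_cons, star_add, star_sub, star_mul', Complex.star_def, map_mul, map_add, map_sub, hXc, hYc]
      linear_combination (starRingEnd ℂ (a 0) * M 0 0 * a 0 + starRingEnd ℂ (a 0) * M 0 1 * a 1
          + starRingEnd ℂ (a 1) * M 1 0 * a 0 + starRingEnd ℂ (a 1) * M 1 1 * a 1) * hX2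
        + (starRingEnd ℂ (b 0) * M 0 0 * b 0 + starRingEnd ℂ (b 0) * M 0 1 * b 1
          + starRingEnd ℂ (b 1) * M 1 0 * b 0 + starRingEnd ℂ (b 1) * M 1 1 * b 1) * (Y * Y) * huu
        + (starRingEnd ℂ (b 0) * M 0 0 * b 0 + starRingEnd ℂ (b 0) * M 0 1 * b 1
          + starRingEnd ℂ (b 1) * M 1 0 * b 0 + starRingEnd ℂ (b 1) * M 1 1 * b 1) * hY2
        + hkB + huc
    · simp only [Matrix.trace, Matrix.mul_apply, Matrix.diag_apply, Fin.sum_univ_two, proj,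
        Matrix.of_apply, Fin.zero_eta, Fin.mk_one, Matrix.cons_val_zero, Matrix.cons_val_one,
        Matrix.head_cons, star_add, star_sub, star_mul', Complex.star_def, map_mul, map_add, map_sub, hXc, hYc]
      linear_combination (starRingEnd ℂ (a 0) * M 0 0 * a 0 + starRingEnd ℂ (a 0) * M 0 1 * a 1
          + starRingEnd ℂ (a 1) * M 1 0 * a 0 + starRingEnd ℂ (a 1) * M 1 1 * a 1) * hX2
        + (starRingEnd ℂ (b 0) * M 0 0 * b 0 + starRingEnd ℂ (b 0) * M 0 1 * b 1
          + starRingEnd ℂ (b 1) * M 1 0 * b 0 + starRingEnd ℂ (b 1) * M 1 1 * b 1) * (Y * Y) * huu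
        + (starRingEnd ℂ (b 0) * M 0 0 * b 0 + starRingEnd ℂ (b 0) * M 0 1 * b 1
          + starRingEnd ℂ (b 1) * M 1 0 * b 0 + starRingEnd ℂ (b 1) * M 1 1 * b 1) * hY2
        + hkB - huc
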